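/- Let ρ > 0, let A, B ∈ ℂ, and let w be a holomorphic function on the open disc D(0,ρ) ⊆ ℂ. Then the following are equivalent: (i) A² = B; (ii) there exist 0 < ρ′ ≤ ρ and a holomorphic function h on D(0,ρ′) with h(0) = 1 such that z·h″(z) − h′(z) = (A + B·z + z²·w(z))·h(z) for all z ∈ D(0,ρ′). -/

import Mathlib

open Metric Finset

/-- Taylor coefficients of the Frobenius solution. -/
noncomputable def appCoeff (A B : ℂ) (wc : ℕ → ℂ) : ℕ → ℂ
  | 0 => 1
  | 1 => -A
  | 2 => 0
  | (n+3) =>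
      (A * appCoeff A B wc (n+2) + B * appCoeff A B wc (n+1)
        + ∑ k ∈ Finset.range (n+1), wc k * appCoeff A B wc (n - k))
      / (((n : ℂ)+3) * ((n : ℂ)+1))
  decreasing_by all_goals omega

lemma appCoeff_bound (A B : ℂ) (wc : ℕ → ℂ) (K M : ℝ) (hK : 0 ≤ K)
    (hwc : ∀ n, ‖wc n‖ ≤ K * M ^ n) (hM1 : 1 ≤ M) (hABK : ‖A‖ + ‖B‖ + K ≤ M) :
    ∀ n, ‖appCoeff A B wc n‖ ≤ M ^ n := by
  have hM0 : (0:ℝ) < M := lt_of_lt_of_le one_pos hM1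
  intro n
  induction n using Nat.strong_induction_on with
  | _ n ih =>
    match n with
    | 0 => simp [appCoeff]
    | 1 =>
      rw [appCoeff, norm_neg, pow_one]
      have := norm_nonneg B
      linarith
    | 2 =>
      rw [appCoeff, norm_zero]
      positivity
    | (m+3) =>
      rw [appCoeff]
      have h2 : ‖appCoeff A B wc (m+2)‖ ≤ M^(m+2) := ih _ (by omega)
      have h1 : ‖appCoeff A B wc (m+1)‖ ≤ M^(m+1) := ih _ (by omega)
      have hs : ‖∑ k ∈ Finset.range (m+1), wc k * appCoeff A B wc (m - k)‖
          ≤ ((m:ℝ)+1) * (K * M^m) := by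
        refine (norm_sum_le _ _).trans ?_
        have hterm : ∀ k ∈ Finset.range (m+1), ‖wc k * appCoeff A B wc (m - k)‖ ≤ K * M^m := by
          intro k hk
          have hk' : k ≤ m := Nat.lt_succ_iff.mp (Finset.mem_range.mp hk)
          rw [norm_mul]
          calc ‖wc k‖ * ‖appCoeff A B wc (m - k)‖
              ≤ (K * M^k) * M^(m-k) := by
                apply mul_le_mul (hwc k) (ih _ (by omega)) (norm_nonneg _) (by positivity)
            _ = K * M^m := by rw [mul_assoc, ← pow_add, Nat.add_sub_cancel' hk']
        calc ∑ k ∈ Finset.range (m+1), ‖wc k * appCoeff A B wc (m - k)‖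
            ≤ ∑ _k ∈ Finset.range (m+1), (K * M^m) := Finset.sum_le_sum hterm
          _ = ((m:ℝ)+1) * (K * M^m) := by
              rw [Finset.sum_const, Finset.card_range]; push_cast; ring
      have hden : ‖((m:ℂ)+3) * ((m:ℂ)+1)‖ = ((m:ℝ)+3) * ((m:ℝ)+1) := by
        rw [norm_mul]
        have e3 : ((m:ℂ)+3) = ((m+3 : ℕ) : ℂ) := by push_cast; ring
        have e1 : ((m:ℂ)+1) = ((m+1 : ℕ) : ℂ) := by push_cast; ring
        rw [e3, e1, Complex.norm_natCast, Complex.norm_natCast]; push_cast; ring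
      rw [norm_div, hden, div_le_iff₀ (by positivity)]
      have hnum : ‖A * appCoeff A B wc (m+2) + B * appCoeff A B wc (m+1)
          + ∑ k ∈ Finset.range (m+1), wc k * appCoeff A B wc (m - k)‖
          ≤ ‖A‖ * M^(m+2) + ‖B‖ * M^(m+1) + ((m:ℝ)+1) * (K * M^m) := by
        refine (norm_add_le _ _).trans (add_le_add ((norm_add_le _ _).trans (add_le_add ?_ ?_)) hs)
        · rw [norm_mul]; exact mul_le_mul_of_nonneg_left h2 (norm_nonneg A)
        · rw [norm_mul]; exact mul_le_mul_of_nonneg_left h1 (norm_nonneg B)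
      refine hnum.trans ?_
      have p1 : M^(m+1) ≤ M^(m+2) := pow_le_pow_right₀ hM1 (by omega)
      have p0 : M^m ≤ M^(m+2) := pow_le_pow_right₀ hM1 (by omega)
      have p2 : (0:ℝ) < M^(m+2) := by positivity
      have key : (‖A‖ + ‖B‖ + K) * M^(m+2) ≤ M^(m+3) := by
        calc (‖A‖ + ‖B‖ + K) * M^(m+2) ≤ M * M^(m+2) :=
              mul_le_mul_of_nonneg_right hABK (le_of_lt p2)
          _ = M^(m+3) := by rw [← pow_succ']
      have hm0 : (0:ℝ) ≤ (m:ℝ) := Nat.cast_nonneg m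
      have p3 : (0:ℝ) < M^(m+3) := by positivity
      calc ‖A‖ * M^(m+2) + ‖B‖ * M^(m+1) + ((m:ℝ)+1) * (K * M^m)
          ≤ ‖A‖ * M^(m+2) + ‖B‖ * M^(m+2) + ((m:ℝ)+1) * (K * M^(m+2)) :=
            add_le_add (add_le_add le_rfl (mul_le_mul_of_nonneg_left p1 (norm_nonneg B)))
              (mul_le_mul_of_nonneg_left (mul_le_mul_of_nonneg_left p0 hK) (by linarith))
        _ ≤ ((m:ℝ)+1) * ((‖A‖+‖B‖+K) * M^(m+2)) := by
            nlinarith [mul_nonneg (mul_nonneg hm0 (norm_nonneg A)) p2.le,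
              mul_nonneg (mul_nonneg hm0 (norm_nonneg B)) p2.le]
        _ ≤ ((m:ℝ)+1) * M^(m+3) := mul_le_mul_of_nonneg_left key (by linarith)
        _ ≤ M^(m+3) * (((m:ℝ) + 3) * ((m:ℝ) + 1)) := by
            nlinarith [mul_nonneg (mul_nonneg hm0 hm0) p3.le, mul_nonneg hm0 p3.le, p3.le]

lemma summable_norm_pow {u : ℕ → ℂ} {C M : ℝ} (hM : 0 ≤ M)
    (hu : ∀ n, ‖u n‖ ≤ C * M ^ n) {z : ℂ} (hz : ‖z‖ * M < 1) :
    Summable fun n => ‖u n * z ^ n‖ := by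
  have h0 : 0 ≤ ‖z‖ * M := by positivity
  refine Summable.of_nonneg_of_le (fun n => norm_nonneg _) (fun n => ?_)
    ((summable_geometric_of_lt_one h0 hz).mul_left C)
  rw [norm_mul, norm_pow]
  calc ‖u n‖ * ‖z‖^n ≤ (C * M^n) * ‖z‖^n :=
        mul_le_mul_of_nonneg_right (hu n) (by positivity)
    _ = C * (‖z‖ * M)^n := by rw [mul_pow]; ring

lemma summable_pow_shift {u : ℕ → ℂ} {C M : ℝ} (hM : 0 ≤ M)
    (hu : ∀ n, ‖u n‖ ≤ C * M ^ n) {z : ℂ} (hz : ‖z‖ * M < 1) (k : ℕ) :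
    Summable fun n => u n * z ^ (n + k) := by
  have := ((summable_norm_pow hM hu hz).of_norm).mul_right (z^k)
  exact this.congr fun n => by rw [mul_assoc, ← pow_add]

lemma shift_bound {u : ℕ → ℂ} {C M : ℝ} (hC : 0 ≤ C) (hM : 0 ≤ M)
    (hu : ∀ n, ‖u n‖ ≤ C * M ^ n) (n : ℕ) :
    ‖((n:ℂ)+1) * u (n+1)‖ ≤ (C*M) * (2*M)^n := by
  rw [norm_mul]
  have h1 : ‖((n:ℂ)+1)‖ = (n:ℝ)+1 := by
    have : ((n:ℂ)+1) = ((n+1 : ℕ) : ℂ) := by push_cast; ring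
    rw [this, Complex.norm_natCast]; push_cast; ring
  have h2 : ((n:ℝ)+1) ≤ 2^n := by exact_mod_cast (Nat.lt_two_pow_self (n := n))
  calc ‖((n:ℂ)+1)‖ * ‖u (n+1)‖ ≤ (2:ℝ)^n * (C * M^(n+1)) := by
        rw [h1]
        exact mul_le_mul h2 (hu (n+1)) (norm_nonneg _) (by positivity)
    _ = (C*M) * (2*M)^n := by rw [mul_pow, pow_succ]; ring

lemma hasDerivAt_tsum_pow {u : ℕ → ℂ} {C M t : ℝ} (hC : 0 ≤ C) (hM : 0 < M) (htM : t * M < 1)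
    (hu : ∀ n, ‖u n‖ ≤ C * M ^ n) {z : ℂ} (hz : z ∈ ball (0:ℂ) t) :
    HasDerivAt (fun y => ∑' n, u n * y ^ n)
      (∑' n : ℕ, (((n:ℕ):ℂ)+1) * u (n+1) * z ^ n) z := by
  have ht : 0 < t := lt_of_le_of_lt dist_nonneg (mem_ball.mp hz)
  have hr0 : 0 ≤ t * M := by positivity
  set v : ℕ → ℝ := fun n => C * M * ((n:ℝ) * (t*M) ^ (n-1)) with hv_def
  have hv : Summable v := by
    have h1 : Summable (fun n : ℕ => (n:ℝ) * (t*M)^(n-1)) := by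
      rw [← summable_nat_add_iff 1]
      simp only [Nat.add_sub_cancel]
      have hn : ‖t * M‖ < 1 := by rwa [Real.norm_eq_abs, abs_of_nonneg hr0]
      have := (summable_pow_mul_geometric_of_norm_lt_one 1 hn).add
        (summable_geometric_of_lt_one hr0 htM)
      exact this.congr (fun n => by push_cast; ring)
    exact h1.mul_left _
  have hbound : ∀ (n : ℕ), ∀ y ∈ ball (0:ℂ) t, ‖u n * ((n:ℂ) * y^(n-1))‖ ≤ v n := by
    intro n y hy
    have hyt : ‖y‖ ≤ t := by
      have := mem_ball.mp hy; rw [dist_zero_right] at this; exact this.le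
    match n with
    | 0 => simp [hv_def]
    | (k+1) =>
      simp only [Nat.add_sub_cancel, hv_def]
      rw [norm_mul, norm_mul, norm_pow, Complex.norm_natCast]
      have hyk : ‖y‖^k ≤ t^k := pow_le_pow_left₀ (norm_nonneg y) hyt k
      have hk0 : (0:ℝ) ≤ ((k+1:ℕ):ℝ) := by positivity
      calc ‖u (k+1)‖ * (((k+1:ℕ):ℝ) * ‖y‖^k)
          ≤ (C*M^(k+1)) * (((k+1:ℕ):ℝ) * t^k) :=
            mul_le_mul (hu _) (mul_le_mul_of_nonneg_left hyk hk0) (by positivity)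
              (by positivity)
        _ = C*M*(((k+1:ℕ):ℝ) * (t*M)^k) := by rw [mul_pow, pow_succ]; ring
  have hsum0 : Summable fun n => u n * (0:ℂ)^n := by
    apply summable_of_ne_finset_zero (s := {0})
    intro n hn
    simp [zero_pow (by simpa using hn)]
  have key := hasDerivAt_tsum_of_isPreconnected hv isOpen_ball
    (convex_ball (0:ℂ) t).isPreconnected
    (g := fun n y => u n * y^n) (g' := fun n y => u n * ((n:ℂ) * y^(n-1)))
    (fun n y _ => ((hasDerivAt_pow n y).const_mul (u n))) hbound (mem_ball_self ht) hsum0 hz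
  have hsumz : Summable fun n => u n * ((n:ℂ) * z^(n-1)) :=
    Summable.of_norm_bounded hv (fun n => hbound n z hz)
  have heq : (∑' n, u n * ((n:ℂ) * z^(n-1))) = ∑' n : ℕ, (((n:ℕ):ℂ)+1) * u (n+1) * z^n := by
    rw [Summable.tsum_eq_zero_add hsumz]
    simp only [Nat.cast_zero, zero_mul, mul_zero, zero_add]
    exact tsum_congr fun n => by push_cast [Nat.add_sub_cancel]; ring
  exact heq ▸ key

set_option maxHeartbeats 2000000 in
/-- Apparent-singularity criterion: for the equation
`f″ = (3/(4z²) + A/z + B + z·w(z))·f` near `z = 0`, a Frobenius solution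
`f = z^{−1/2}·h(z)` with `h` holomorphic and `h(0) = 1` (i.e. a holomorphic
solution `h` of `z·h″ − h′ = (A + Bz + z²w)·h`) exists if and only if `A² = B`. -/
theorem apparent_singularity_criterion
    (ρ : ℝ) (hρ : 0 < ρ) (A B : ℂ) (w : ℂ → ℂ)
    (hw : DifferentiableOn ℂ w (ball (0 : ℂ) ρ)) :
    A ^ 2 = B ↔
      ∃ ρ' : ℝ, 0 < ρ' ∧ ρ' ≤ ρ ∧
        ∃ h : ℂ → ℂ, DifferentiableOn ℂ h (ball (0 : ℂ) ρ') ∧ h 0 = 1 ∧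
          ∀ z ∈ ball (0 : ℂ) ρ',
            z * deriv (deriv h) z - deriv h z = (A + B * z + z ^ 2 * w z) * h z := by
  constructor
  · intro hAB
    classical
    -- power series of w at 0
    have hwA : AnalyticAt ℂ w 0 := hw.analyticAt (ball_mem_nhds 0 hρ)
    obtain ⟨pw, hpw⟩ := hwA
    obtain ⟨rw', hrw⟩ := hpw
    obtain ⟨r, hrpos, hrlt⟩ : ∃ r : NNReal, 0 < r ∧ (r : ENNReal) < rw' := by
      rcases ENNReal.lt_iff_exists_nnreal_btwn.mp hrw.r_pos with ⟨r, hr1, hr2⟩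
      exact ⟨r, by exact_mod_cast hr1, hr2⟩
    obtain ⟨K, hK0, hKb⟩ := pw.norm_mul_pow_le_of_lt_radius (lt_of_lt_of_le hrlt hrw.r_le)
    set wc : ℕ → ℂ := fun n => pw.coeff n with hwc_def
    have hr0 : (0:ℝ) < (r:ℝ) := hrpos
    have hwcb : ∀ n, ‖wc n‖ ≤ K * ((r:ℝ)⁻¹)^n := by
      intro n
      have h1 : ‖wc n‖ ≤ ‖pw n‖ := by
        have h2 := (pw n).le_opNorm (fun _ => (1:ℂ))
        simp only [norm_one, Finset.prod_const, one_pow, mul_one] at h2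
        exact h2
      have h3 : ‖wc n‖ * (r:ℝ)^n ≤ K :=
        le_trans (mul_le_mul_of_nonneg_right h1 (by positivity)) (hKb n)
      rw [inv_pow]
      calc ‖wc n‖ = ‖wc n‖ * (r:ℝ)^n * ((r:ℝ)^n)⁻¹ := by field_simp
        _ ≤ K * ((r:ℝ)^n)⁻¹ := mul_le_mul_of_nonneg_right h3 (by positivity)
    set M : ℝ := 1 + (r:ℝ)⁻¹ + ‖A‖ + ‖B‖ + K with hM_def
    have hrinv0 : (0:ℝ) ≤ (r:ℝ)⁻¹ := by positivity
    have hM1 : 1 ≤ M := by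
      have := norm_nonneg A; have := norm_nonneg B
      rw [hM_def]; linarith
    have hM0 : (0:ℝ) < M := lt_of_lt_of_le one_pos hM1
    have hMr : (r:ℝ)⁻¹ ≤ M := by
      have := norm_nonneg A; have := norm_nonneg B
      rw [hM_def]; linarith
    have hABK : ‖A‖ + ‖B‖ + K ≤ M := by rw [hM_def]; linarith
    have hwcM : ∀ n, ‖wc n‖ ≤ K * M^n := fun n => (hwcb n).trans
      (mul_le_mul_of_nonneg_left (pow_le_pow_left₀ hrinv0 hMr n) hK0.le)
    set c : ℕ → ℂ := appCoeff A B wc with hc_def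
    have hcM : ∀ n, ‖c n‖ ≤ 1 * M^n := by
      intro n; rw [one_mul]
      exact appCoeff_bound A B wc K M hK0.le hwcM hM1 hABK n
    -- shifted coefficient bounds
    have hb1 : ∀ n : ℕ, ‖(((n:ℕ):ℂ)+1) * c (n+1)‖ ≤ (1*M) * (2*M)^n :=
      shift_bound (by norm_num) hM0.le hcM
    have hb1s : ∀ n : ℕ, ‖((((n+1:ℕ)):ℂ)+1) * c (n+2)‖ ≤ ((1*M)*(2*M)) * (2*M)^n := by
      intro n
      have := hb1 (n+1)
      calc ‖((((n+1:ℕ)):ℂ)+1) * c (n+2)‖ ≤ (1*M) * (2*M)^(n+1) := this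
        _ = ((1*M)*(2*M)) * (2*M)^n := by rw [pow_succ]; ring
    have hb2 : ∀ n : ℕ, ‖(((n:ℕ):ℂ)+1) * ((((n+1:ℕ)):ℂ)+1) * c (n+2)‖
        ≤ ((1*M)*(2*M)) * (2*(2*M))^n := by
      intro n
      have h := shift_bound (C := 1*M) (M := 2*M) (by positivity) (by positivity) hb1 n
      calc ‖(((n:ℕ):ℂ)+1) * ((((n+1:ℕ)):ℂ)+1) * c (n+2)‖
          = ‖(((n:ℕ):ℂ)+1) * (((((n+1:ℕ)):ℂ)+1) * c (n+2))‖ := by rw [mul_assoc]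
        _ ≤ ((1*M)*(2*M)) * (2*(2*M))^n := h
    have h2pow : ∀ n : ℕ, ((n:ℝ)+1) ≤ 2^n := fun n => by exact_mod_cast (Nat.lt_two_pow_self (n := n))
    have hb4 : ∀ n : ℕ, ‖((n:ℂ) * ((n:ℂ)+2)) * c (n+2)‖ ≤ (2*(M*M)) * (2*(2*M))^n := by
      intro n
      rw [norm_mul, norm_mul]
      have e1 : ‖(n:ℂ)‖ = (n:ℝ) := Complex.norm_natCast n
      have e2 : ‖(n:ℂ)+2‖ = (n:ℝ)+2 := by
        have e : ((n:ℂ)+2) = ((n+2:ℕ):ℂ) := by push_cast; ring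
        rw [e, Complex.norm_natCast]; push_cast; ring
      have h1 : (1:ℝ) ≤ 2^n := one_le_pow₀ (by norm_num)
      have b1 : (n:ℝ) ≤ 2^n := by have := h2pow n; linarith
      have b2 : (n:ℝ)+2 ≤ 2*2^n := by have := h2pow n; linarith
      rw [e1, e2]
      calc (n:ℝ) * ((n:ℝ)+2) * ‖c (n+2)‖
          ≤ ((2:ℝ)^n * (2*2^n)) * (1*M^(n+2)) := by
            apply mul_le_mul (mul_le_mul b1 b2 (by positivity) (by positivity)) (hcM (n+2))
              (norm_nonneg _) (by positivity)
        _ = (2*(M*M)) * (2*(2*M))^n := by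
            rw [show ((2:ℝ)*(2*M))^n = 2^n*(2^n*M^n) by rw [mul_pow, mul_pow], pow_add]
            ring
    -- choice of radius
    set t : ℝ := min ρ (1/(8*M)) with ht_def
    have ht0 : 0 < t := lt_min hρ (by positivity)
    have htρ : t ≤ ρ := min_le_left _ _
    have ht8 : t * (8*M) ≤ 1 := by
      have h1 : t ≤ 1/(8*M) := min_le_right _ _
      calc t * (8*M) ≤ (1/(8*M)) * (8*M) := mul_le_mul_of_nonneg_right h1 (by positivity)
        _ = 1 := by field_simp
    have htM : t * M < 1 := by nlinarith [mul_pos ht0 hM0]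
    have ht2M : t * (2*M) < 1 := by nlinarith [mul_pos ht0 hM0]
    have ht4M : t * (2*(2*M)) < 1 := by nlinarith [mul_pos ht0 hM0]
    have htr : t < (r:ℝ) := by
      have h1 : t ≤ 1/(8*M) := min_le_right _ _
      have h2 : (1:ℝ) ≤ (r:ℝ) * M := by
        calc (1:ℝ) = (r:ℝ) * (r:ℝ)⁻¹ := by field_simp
          _ ≤ (r:ℝ) * M := mul_le_mul_of_nonneg_left hMr hr0.le
      have h3 : 1/(8*M) < (r:ℝ) := by
        rw [div_lt_iff₀ (by positivity)]
        nlinarith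
      linarith
    -- the candidate solution
    refine ⟨t, ht0, htρ, fun y => ∑' n, c n * y^n, ?_, ?_, ?_⟩
    · intro y hy
      exact (hasDerivAt_tsum_pow (by norm_num) hM0 htM hcM hy).differentiableAt.differentiableWithinAt
    · show ∑' n, c n * (0:ℂ)^n = 1
      rw [tsum_eq_single 0 (fun n hn => by simp [zero_pow hn])]
      norm_num [hc_def, appCoeff]
    · intro z hz
      have hzt : ‖z‖ < t := by rwa [mem_ball, dist_zero_right] at hz
      have hz0 : (0:ℝ) ≤ ‖z‖ := norm_nonneg z
      have hzM : ‖z‖ * M < 1 := by nlinarith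
      have hz2M : ‖z‖ * (2*M) < 1 := by nlinarith
      have hz4M : ‖z‖ * (2*(2*M)) < 1 := by nlinarith
      -- derivative identities
      have hD1 : ∀ y ∈ ball (0:ℂ) t,
          HasDerivAt (fun y => ∑' n, c n * y^n)
            (∑' n : ℕ, (((n:ℕ):ℂ)+1) * c (n+1) * y^n) y :=
        fun y hy => hasDerivAt_tsum_pow (by norm_num) hM0 htM hcM hy
      have hD2 : HasDerivAt (fun y => ∑' n : ℕ, (((n:ℕ):ℂ)+1) * c (n+1) * y^n)
          (∑' n : ℕ, (((n:ℕ):ℂ)+1) * (((((n+1:ℕ)):ℂ)+1) * c (n+1+1)) * z^n) z :=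
        hasDerivAt_tsum_pow (C := 1*M) (M := 2*M) (by positivity) (by positivity) ht2M hb1 hz
      have hderiv1 : deriv (fun y => ∑' n, c n * y^n) z = ∑' n : ℕ, (((n:ℕ):ℂ)+1) * c (n+1) * z^n :=
        (hD1 z hz).deriv
      have hderiv2 : deriv (deriv (fun y => ∑' n, c n * y^n)) z
          = ∑' n : ℕ, (((n:ℕ):ℂ)+1) * (((((n+1:ℕ)):ℂ)+1) * c (n+1+1)) * z^n := by
        have hev : deriv (fun y => ∑' n, c n * y^n)
            =ᶠ[nhds z] (fun y => ∑' n : ℕ, (((n:ℕ):ℂ)+1) * c (n+1) * y^n) := by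
          filter_upwards [isOpen_ball.mem_nhds hz] with y hy
          exact (hD1 y hy).deriv
        rw [hev.deriv_eq, hD2.deriv]
      rw [hderiv1, hderiv2]
      show z * (∑' n : ℕ, (((n:ℕ):ℂ)+1) * (((((n+1:ℕ)):ℂ)+1) * c (n+1+1)) * z^n)
          - (∑' n : ℕ, (((n:ℕ):ℂ)+1) * c (n+1) * z^n)
        = (A + B * z + z ^ 2 * w z) * (∑' n, c n * z^n)
      -- coefficient values
      have hc0v : c 0 = 1 := by norm_num [hc_def, appCoeff]
      have hc1v : c 1 = -A := by norm_num [hc_def, appCoeff]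
      -- Cauchy product coefficients
      set d : ℕ → ℂ := fun n => ∑ k ∈ Finset.range (n+1), wc k * c (n-k) with hd_def
      have hbD : ∀ n, ‖d n‖ ≤ K * (2*M)^n := by
        intro n
        have hdn : d n = ∑ k ∈ Finset.range (n+1), wc k * c (n-k) := rfl
        rw [hdn]
        calc ‖∑ k ∈ Finset.range (n+1), wc k * c (n-k)‖
            ≤ ∑ k ∈ Finset.range (n+1), ‖wc k * c (n-k)‖ := norm_sum_le _ _
          _ ≤ ∑ _k ∈ Finset.range (n+1), K * M^n := by
              refine Finset.sum_le_sum (fun k hk => ?_)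
              have hk' : k ≤ n := Nat.lt_succ_iff.mp (Finset.mem_range.mp hk)
              rw [norm_mul]
              calc ‖wc k‖ * ‖c (n-k)‖ ≤ (K * M^k) * (1 * M^(n-k)) :=
                    mul_le_mul (hwcM k) (hcM (n-k)) (norm_nonneg _) (by positivity)
                _ = K * M^n := by rw [one_mul, mul_assoc, ← pow_add, Nat.add_sub_cancel' hk']
          _ = ((n:ℝ)+1) * (K * M^n) := by
              rw [Finset.sum_const, Finset.card_range]; push_cast; ring
          _ ≤ 2^n * (K*M^n) := mul_le_mul_of_nonneg_right (h2pow n) (by positivity)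
          _ = K * (2*M)^n := by rw [mul_pow]; ring
      -- key recurrence
      have hkey : ∀ n : ℕ, ((n:ℂ)+1) * ((n:ℂ)+3) * c (n+3) = A * c (n+2) + B * c (n+1) + d n := by
        intro n
        have hc3 : c (n+3) = (A * c (n+2) + B * c (n+1) + d n) / (((n:ℂ)+3) * ((n:ℂ)+1)) := by
          show appCoeff A B wc (n+3)
            = (A * c (n+2) + B * c (n+1) + d n) / (((n:ℂ)+3) * ((n:ℂ)+1))
          rw [appCoeff]
        have hne1 : ((n:ℂ)+1) ≠ 0 := Nat.cast_add_one_ne_zero n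
        have hne3 : ((n:ℂ)+3) ≠ 0 := by
          have e : ((n:ℂ)+3) = ((n+3:ℕ):ℂ) := by push_cast; ring
          rw [e]; exact Nat.cast_ne_zero.mpr (by omega)
        rw [hc3]
        field_simp
      -- summabilities at z
      have SWn := summable_norm_pow hM0.le hwcM hzM
      have SCn := summable_norm_pow hM0.le hcM hzM
      have SC : Summable fun n => c n * z^n := SCn.of_norm
      have SC1 : Summable (fun n : ℕ => (((n:ℕ):ℂ)+1) * c (n+1) * z^n) :=
        (summable_norm_pow (by positivity) hb1 hz2M).of_norm
      have SC1s : Summable (fun n : ℕ => ((((n+1:ℕ)):ℂ)+1) * c (n+2) * z^(n+1)) :=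
        summable_pow_shift (by positivity) hb1s hz2M 1
      have SC2 : Summable (fun n : ℕ =>
          (((n:ℕ):ℂ)+1) * ((((n+1:ℕ):ℂ))+1) * c (n+2) * z^(n+1)) :=
        summable_pow_shift (by positivity) hb2 hz4M 1
      have SC4 : Summable (fun n : ℕ => ((n:ℂ) * ((n:ℂ)+2)) * c (n+2) * z^(n+1)) :=
        summable_pow_shift (by positivity) hb4 hz4M 1
      have SD2 : Summable (fun n : ℕ => d n * z^(n+2)) :=
        summable_pow_shift (by positivity) hbD hz2M 2
      have SA : Summable (fun n : ℕ => A * (c n * z^n)) := SC.mul_left A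
      have SA1 : Summable (fun n : ℕ => A * (c (n+1) * z^(n+1))) := by
        have := (summable_nat_add_iff (f := fun n : ℕ => A * (c n * z^n)) 1).mpr SA
        exact this.congr fun n => rfl
      have SB1 : Summable (fun n : ℕ => B * (c n * z^(n+1))) :=
        (summable_pow_shift hM0.le hcM hzM 1).mul_left B
      have hbA2 : ∀ n : ℕ, ‖A * c (n+2)‖ ≤ (‖A‖*(M*M))*M^n := by
        intro n
        rw [norm_mul]
        calc ‖A‖ * ‖c (n+2)‖ ≤ ‖A‖ * (1*M^(n+2)) :=
              mul_le_mul_of_nonneg_left (hcM (n+2)) (norm_nonneg A)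
          _ = (‖A‖*(M*M))*M^n := by rw [one_mul, pow_add]; ring
      have hbB1 : ∀ n : ℕ, ‖B * c (n+1)‖ ≤ (‖B‖*M)*M^n := by
        intro n
        rw [norm_mul]
        calc ‖B‖ * ‖c (n+1)‖ ≤ ‖B‖ * (1*M^(n+1)) :=
              mul_le_mul_of_nonneg_left (hcM (n+1)) (norm_nonneg B)
          _ = (‖B‖*M)*M^n := by rw [one_mul, pow_add]; ring
      have SA2 : Summable (fun n : ℕ => A * c (n+2) * z^(n+2)) :=
        summable_pow_shift hM0.le hbA2 hzM 2
      have SB2 : Summable (fun n : ℕ => B * c (n+1) * z^(n+2)) :=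
        summable_pow_shift hM0.le hbB1 hzM 2
      -- w as a power series at z
      have hzr : z ∈ Metric.eball (0:ℂ) rw' := by
        rw [mem_emetric_ball_zero_iff]
        have h1 : ‖z‖₊ < r := by
          rw [← NNReal.coe_lt_coe]
          exact lt_trans (by exact_mod_cast hzt) htr
        exact lt_trans (by exact_mod_cast h1) hrlt
      have hwz : w z = ∑' n, wc n * z^n := by
        have hs := hrw.hasSum hzr
        simp only [FormalMultilinearSeries.apply_eq_pow_smul_coeff, smul_eq_mul, zero_add] at hs
        rw [← hs.tsum_eq]
        exact tsum_congr fun n => by rw [mul_comm]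
      -- Cauchy product
      have hwzhz : w z * (∑' n, c n * z^n) = ∑' n, d n * z^n := by
        rw [hwz, tsum_mul_tsum_eq_tsum_sum_range_of_summable_norm SWn SCn]
        refine tsum_congr fun n => ?_
        have hdn : d n = ∑ k ∈ Finset.range (n+1), wc k * c (n-k) := rfl
        rw [hdn, Finset.sum_mul]
        refine Finset.sum_congr rfl fun k hk => ?_
        have hk' : k ≤ n := Nat.lt_succ_iff.mp (Finset.mem_range.mp hk)
        rw [mul_mul_mul_comm, ← pow_add, Nat.add_sub_cancel' hk']
      -- RHS computation
      have hRHS : (A + B*z + z^2*w z) * (∑' n, c n * z^n)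
          = A + ∑' n : ℕ, (A * c (n+2) + B * c (n+1) + d n) * z^(n+2) := by
        have e1 : (A + B*z + z^2*w z) * (∑' n, c n * z^n)
            = A * (∑' n, c n * z^n) + B * (z * (∑' n, c n * z^n))
              + z^2 * (w z * (∑' n, c n * z^n)) := by ring
        rw [e1, hwzhz]
        have eA : A * (∑' n, c n * z^n)
            = A * c 0 + A * c 1 * z + ∑' n : ℕ, A * c (n+2) * z^(n+2) := by
          rw [← tsum_mul_left, Summable.tsum_eq_zero_add SA, Summable.tsum_eq_zero_add SA1]
          have e2 : (∑' n : ℕ, A * (c (n+1+1) * z^(n+1+1)))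
              = ∑' n : ℕ, A * c (n+2) * z^(n+2) :=
            tsum_congr fun n => by rw [show n+1+1 = n+2 from rfl]; ring
          rw [e2]; ring
        have ez : z * (∑' n, c n * z^n) = ∑' n : ℕ, c n * z^(n+1) := by
          rw [← tsum_mul_left]; exact tsum_congr fun n => by ring
        have eB : B * (z * (∑' n, c n * z^n))
            = B * c 0 * z + ∑' n : ℕ, B * c (n+1) * z^(n+2) := by
          rw [ez, ← tsum_mul_left, Summable.tsum_eq_zero_add SB1]
          have e2 : (∑' n : ℕ, B * (c (n+1) * z^(n+1+1)))
              = ∑' n : ℕ, B * c (n+1) * z^(n+2) :=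
            tsum_congr fun n => by rw [show n+1+1 = n+2 from rfl]; ring
          rw [e2]; ring
        have eW : z^2 * (∑' n, d n * z^n) = ∑' n : ℕ, d n * z^(n+2) := by
          rw [← tsum_mul_left]; exact tsum_congr fun n => by ring
        rw [eA, eB, eW]
        have hsum : (∑' n : ℕ, A * c (n+2) * z^(n+2)) + (∑' n : ℕ, B * c (n+1) * z^(n+2))
              + (∑' n : ℕ, d n * z^(n+2))
            = ∑' n : ℕ, (A * c (n+2) + B * c (n+1) + d n) * z^(n+2) := by
          rw [← Summable.tsum_add SA2 SB2, ← Summable.tsum_add (SA2.add SB2) SD2]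
          exact tsum_congr fun n => by ring
        rw [← hsum, hc0v, hc1v]
        linear_combination (-z) * hAB
      -- LHS computation
      have eZ2 : z * (∑' n : ℕ, (((n:ℕ):ℂ)+1) * (((((n+1:ℕ)):ℂ)+1) * c (n+1+1)) * z^n)
          = ∑' n : ℕ, (((n:ℕ):ℂ)+1) * ((((n+1:ℕ):ℂ))+1) * c (n+2) * z^(n+1) := by
        rw [← tsum_mul_left]
        exact tsum_congr fun n => by rw [show n+1+1 = n+2 from rfl]; ring
      have eL1 : (∑' n : ℕ, (((n:ℕ):ℂ)+1) * c (n+1) * z^n)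
          = c 1 + ∑' n : ℕ, ((((n+1:ℕ)):ℂ)+1) * c (n+2) * z^(n+1) := by
        rw [Summable.tsum_eq_zero_add SC1]
        congr 1
        norm_num
      rw [eZ2, eL1, hc1v, hRHS]
      have eSub : (∑' n : ℕ, (((n:ℕ):ℂ)+1) * ((((n+1:ℕ):ℂ))+1) * c (n+2) * z^(n+1))
            - (∑' n : ℕ, ((((n+1:ℕ)):ℂ)+1) * c (n+2) * z^(n+1))
          = ∑' n : ℕ, ((n:ℂ) * ((n:ℂ)+2)) * c (n+2) * z^(n+1) := by
        rw [← Summable.tsum_sub SC2 SC1s]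
        exact tsum_congr fun n => by push_cast; ring
      have ePeel : (∑' n : ℕ, ((n:ℂ) * ((n:ℂ)+2)) * c (n+2) * z^(n+1))
          = ∑' n : ℕ, (A * c (n+2) + B * c (n+1) + d n) * z^(n+2) := by
        rw [Summable.tsum_eq_zero_add SC4]
        have e0 : ((0:ℕ):ℂ) * (((0:ℕ):ℂ)+2) * c (0+2) * z^(0+1) = 0 := by
          norm_num
        rw [e0, zero_add]
        refine tsum_congr fun n => ?_
        rw [show n+1+2 = n+3 from rfl, show n+1+1 = n+2 from rfl]
        have hk := hkey n
        push_cast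
        linear_combination z^(n+2) * hk
      calc (∑' n : ℕ, (((n:ℕ):ℂ)+1) * ((((n+1:ℕ):ℂ))+1) * c (n+2) * z^(n+1))
            - (-A + ∑' n : ℕ, ((((n+1:ℕ)):ℂ)+1) * c (n+2) * z^(n+1))
          = A + ((∑' n : ℕ, (((n:ℕ):ℂ)+1) * ((((n+1:ℕ):ℂ))+1) * c (n+2) * z^(n+1))
              - (∑' n : ℕ, ((((n+1:ℕ)):ℂ)+1) * c (n+2) * z^(n+1))) := by ring
        _ = A + ∑' n : ℕ, ((n:ℂ) * ((n:ℂ)+2)) * c (n+2) * z^(n+1) := by rw [eSub]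
        _ = A + ∑' n : ℕ, (A * c (n+2) + B * c (n+1) + d n) * z^(n+2) := by rw [ePeel]

  · rintro ⟨ρ', hρ'0, hρ'ρ, h, hdiff, h0, heq⟩
    have hball : (0:ℂ) ∈ ball (0:ℂ) ρ' := mem_ball_self hρ'0
    have hAn : AnalyticOnNhd ℂ h (ball (0:ℂ) ρ') := hdiff.analyticOnNhd isOpen_ball
    have hA1 : AnalyticOnNhd ℂ (deriv h) (ball (0:ℂ) ρ') := hAn.deriv
    have hA2 : AnalyticOnNhd ℂ (deriv (deriv h)) (ball (0:ℂ) ρ') := hA1.deriv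
    have hwA : AnalyticAt ℂ w 0 := hw.analyticAt (ball_mem_nhds 0 hρ)
    have e0 := heq 0 hball
    rw [h0] at e0
    simp at e0
    -- e0 : deriv h 0 = -(A) (some form); inspect
    have hF : HasDerivAt (fun z : ℂ => z * deriv (deriv h) z - deriv h z)
        ((1:ℂ) * deriv (deriv h) 0 + 0 * deriv (deriv (deriv h)) 0 - deriv (deriv h) 0) 0 := by
      exact ((hasDerivAt_id (0:ℂ)).mul
        ((hA2 0 hball).differentiableAt.hasDerivAt)).sub
        ((hA1 0 hball).differentiableAt.hasDerivAt)
    have hu : HasDerivAt (fun z : ℂ => A + B * z + z^2 * w z)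
        ((0 + B * 1) + ((2:ℕ) * (0:ℂ)^(2-1) * w 0 + (0:ℂ)^2 * deriv w 0)) 0 := by
      exact (((hasDerivAt_const (0:ℂ) A).add ((hasDerivAt_id (0:ℂ)).const_mul B)).add
        ((hasDerivAt_pow 2 (0:ℂ)).mul (hwA.differentiableAt.hasDerivAt)))
    have hG : HasDerivAt (fun z : ℂ => (A + B * z + z^2 * w z) * h z)
        (((0 + B * 1) + ((2:ℕ) * (0:ℂ)^(2-1) * w 0 + (0:ℂ)^2 * deriv w 0)) * h 0
          + (A + B * 0 + 0^2 * w 0) * deriv h 0) 0 :=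
      hu.mul ((hAn 0 hball).differentiableAt.hasDerivAt)
    have hFG : deriv (fun z : ℂ => z * deriv (deriv h) z - deriv h z) 0
        = deriv (fun z : ℂ => (A + B * z + z^2 * w z) * h z) 0 := by
      apply Filter.EventuallyEq.deriv_eq
      filter_upwards [isOpen_ball.mem_nhds hball] with y hy
      exact heq y hy
    rw [hF.deriv, hG.deriv] at hFG
    simp [h0] at hFG
    -- hFG should now say 0 = B + A * deriv h 0, with e0: deriv h 0 = -A
    have e0' : deriv h 0 = -A := by linear_combination -e0
    rw [e0'] at hFG
    linear_combination hFG
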